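/- Let n ≥ 1 and j an integer with gcd(j, n) = 1, and suppose the eigenvalues of an n×n Hermitian matrix A on the Fourier eigenbasis are λₖ = jk + cₖn for integers cₖ (k = 0,…,n−1), where the k-th eigenvector is Fₖ with (Fₖ)ₐ = e^{2πiak/n}/√n. Then at time t = 2πm/n, where m satisfies jm ≡ 1 (mod n), one has ⟨1| exp(−itA) |0⟩ = 1; i.e., A has perfect state transfer from vertex 0 to vertex 1. -/

import Mathlib

open Matrix BigOperators

lemma sum_exp_pow (n : ℕ) (hn : 0 < n) (d : ℤ) :
    ∑ k ∈ Finset.range n, Complex.exp (2 * Real.pi * Complex.I * d / n) ^ k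
      = if (n : ℤ) ∣ d then (n : ℂ) else 0 := by
  set ζ : ℂ := Complex.exp (2 * Real.pi * Complex.I * d / n) with hζ
  have hn' : (n : ℂ) ≠ 0 := Nat.cast_ne_zero.2 hn.ne'
  have h2 : (2 * (Real.pi : ℂ) * Complex.I) ≠ 0 := by
    simp [Real.pi_ne_zero, Complex.I_ne_zero, Complex.ofReal_ne_zero]
  have hζn : ζ ^ n = 1 := by
    rw [hζ, ← Complex.exp_nat_mul]
    have : (n : ℂ) * (2 * Real.pi * Complex.I * d / n) = d * (2 * Real.pi * Complex.I) := by
      field_simp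
    rw [this, Complex.exp_int_mul_two_pi_mul_I]
  by_cases hd : (n : ℤ) ∣ d
  · obtain ⟨e, rfl⟩ := hd
    have hζ1 : ζ = 1 := by
      rw [hζ]
      have : 2 * (Real.pi : ℂ) * Complex.I * ((n * e : ℤ) : ℂ) / n
          = e * (2 * Real.pi * Complex.I) := by
        push_cast; field_simp
      rw [this, Complex.exp_int_mul_two_pi_mul_I]
    simp [hζ1, dvd_mul_right]
  · have hζ1 : ζ ≠ 1 := by
      intro h
      rw [hζ, Complex.exp_eq_one_iff] at h
      obtain ⟨e, he⟩ := h
      apply hd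
      refine ⟨e, ?_⟩
      have hc : (d : ℂ) = n * e := by
        have h3 : (d : ℂ) * (2 * Real.pi * Complex.I)
            = (n * e : ℂ) * (2 * Real.pi * Complex.I) := by
          field_simp at he
          linear_combination (2 * (Real.pi:ℂ) * Complex.I) * he
        exact mul_right_cancel₀ h2 h3
      exact_mod_cast hc
    rw [geom_sum_eq hζ1, hζn]
    simp [hd]

theorem circulant_linear_spectrum_pst (n : ℕ) (hn : 1 < n) [NeZero n]
    (j : ℤ) (hj : Int.gcd j n = 1) (c : Fin n → ℤ)
    (A : Matrix (Fin n) (Fin n) ℂ) (hA : A.IsHermitian)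
    (heig : ∀ k : Fin n,
      A.mulVec (fun a : Fin n => Complex.exp (2 * Real.pi * Complex.I * a * k / n) / Real.sqrt n)
        = ((j * (k : ℕ) + c k * n : ℤ) : ℂ) •
          (fun a : Fin n => Complex.exp (2 * Real.pi * Complex.I * a * k / n) / Real.sqrt n))
    (m : ℤ) (hm : j * m ≡ 1 [ZMOD n]) :
    (NormedSpace.exp
        ((-(Complex.I * ((2 * Real.pi * m / n : ℝ) : ℂ))) • A)) 1 0 = 1 := by
  have hn0 : 0 < n := hn.le.trans' (by norm_num)
  have hnC : (n : ℂ) ≠ 0 := Nat.cast_ne_zero.2 hn0.ne'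
  have hnR : (0:ℝ) ≤ (n:ℝ) := Nat.cast_nonneg n
  have hsq : ((Real.sqrt n : ℝ) : ℂ) * ((Real.sqrt n : ℝ) : ℂ) = (n : ℂ) := by
    rw [← Complex.ofReal_mul, Real.mul_self_sqrt hnR]; exact Complex.ofReal_natCast n
  have hsqne : ((Real.sqrt n : ℝ) : ℂ) ≠ 0 := by
    intro h
    apply hnC
    rw [← hsq, h, mul_zero]
  set U : Matrix (Fin n) (Fin n) ℂ :=
    fun a k => Complex.exp (2 * Real.pi * Complex.I * a * k / n) / Real.sqrt n with hUdef
  -- unitarity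
  have hU : U * Uᴴ = 1 := by
    ext a b
    rw [Matrix.mul_apply, Matrix.one_apply]
    have hterm : ∀ k : Fin n, U a k * Uᴴ k b
        = Complex.exp (2 * Real.pi * Complex.I * ((((a:ℤ) - (b:ℤ)) : ℤ) : ℂ) / n) ^ (k:ℕ) / n := by
      intro k
      have hconj : (starRingEnd ℂ) (2 * Real.pi * Complex.I * b * k / n)
          = -(2 * Real.pi * Complex.I * b * k / n) := by
        simp only [map_div₀, _root_.map_mul, Complex.conj_ofReal, Complex.conj_I, map_ofNat,
          Complex.conj_natCast]
        ring
      rw [Matrix.conjTranspose_apply, hUdef]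
      rw [Complex.star_def, map_div₀, ← Complex.exp_conj, Complex.conj_ofReal, hconj]
      rw [div_mul_div_comm, hsq, ← Complex.exp_add, ← Complex.exp_nat_mul]
      congr 1
      push_cast
      field_simp
      ring
    rw [Finset.sum_congr rfl (fun k _ => hterm k), ← Finset.sum_div,
      Fin.sum_univ_eq_sum_range
        (fun i => Complex.exp (2 * Real.pi * Complex.I * ((((a:ℤ) - (b:ℤ)) : ℤ) : ℂ) / n) ^ i) n,
      sum_exp_pow n hn0]
    by_cases hab : a = b
    · subst hab; simp [hnC]
    · have hnd : ¬ (n:ℤ) ∣ ((a:ℤ) - (b:ℤ)) := by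
        intro h
        apply hab
        obtain ⟨q, hq⟩ := h
        have hq0 : q = 0 := by nlinarith [a.isLt, b.isLt]
        rw [hq0, mul_zero] at hq
        omega
      simp [hnd, hab]
  have hU' : Uᴴ * U = 1 := mul_eq_one_comm.mp hU
  have hUunit : IsUnit U := ⟨⟨U, Uᴴ, hU, hU'⟩, rfl⟩
  have hUinv : U⁻¹ = Uᴴ := Matrix.inv_eq_right_inv hU
  set D : Matrix (Fin n) (Fin n) ℂ :=
    Matrix.diagonal (fun k : Fin n => ((j * (k:ℕ) + c k * n : ℤ) : ℂ)) with hDdef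
  have hAU : A * U = U * D := by
    ext a k
    have h1 : (A * U) a k = A.mulVec (fun b => U b k) a := by
      rw [Matrix.mul_apply, Matrix.mulVec, dotProduct]
    rw [h1, heig k, hDdef, Matrix.mul_diagonal]
    simp [hUdef, mul_comm]
  have hAdecomp : A = U * D * U⁻¹ := by
    have h1 : A * U * U⁻¹ = A := by
      rw [Matrix.mul_assoc, hUinv, hU, Matrix.mul_one]
    rw [← h1, hAU]
  set t : ℂ := -(Complex.I * ((2 * Real.pi * m / n : ℝ) : ℂ)) with htdef
  have hsmul : t • A = U * (t • D) * U⁻¹ := by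
    rw [hAdecomp, Matrix.mul_smul, Matrix.smul_mul]
  have hpi : NormedSpace.exp (t • fun k : Fin n => ((j * (k:ℕ) + c k * n : ℤ) : ℂ))
      = fun k : Fin n => Complex.exp (t * ((j * (k:ℕ) + c k * n : ℤ) : ℂ)) := by
    funext k
    rw [Pi.coe_exp, Pi.smul_apply, smul_eq_mul, Complex.exp_eq_exp_ℂ]
  have hexp : NormedSpace.exp (t • A)
      = U * Matrix.diagonal (fun k : Fin n =>
          Complex.exp (t * ((j * (k:ℕ) + c k * n : ℤ) : ℂ))) * Uᴴ := by
    rw [hsmul, Matrix.exp_conj _ _ hUunit, hUinv]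
    congr 2
    rw [hDdef, ← Matrix.diagonal_smul, Matrix.exp_diagonal, hpi]
  -- eigen-phase computation
  obtain ⟨q, hq⟩ := hm.dvd  -- 1 - j*m = n*q
  have hjm : (j : ℂ) * m = 1 - n * q := by
    have h := congrArg (Int.cast : ℤ → ℂ) hq
    push_cast at h
    linear_combination -h
  have hphase : ∀ k : Fin n,
      Complex.exp (t * ((j * (k:ℕ) + c k * n : ℤ) : ℂ))
        = Complex.exp (-(2 * Real.pi * Complex.I * (k:ℕ) / n)) := by
    intro k
    have hsplit : t * ((j * (k:ℕ) + c k * n : ℤ) : ℂ)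
        = -(2 * Real.pi * Complex.I * (k:ℕ) / n)
          + (-(m * c k) + q * k : ℤ) * (2 * Real.pi * Complex.I) := by
      rw [htdef]
      push_cast
      field_simp
      linear_combination (-((k:ℕ):ℂ)) * hjm
    rw [hsplit, Complex.exp_add, Complex.exp_int_mul_two_pi_mul_I, mul_one]
  -- final computation
  rw [hexp]
  have hentry : (U * Matrix.diagonal (fun k : Fin n =>
      Complex.exp (t * ((j * (k:ℕ) + c k * n : ℤ) : ℂ))) * Uᴴ) 1 0
      = ∑ k : Fin n, U 1 k * Complex.exp (t * ((j * (k:ℕ) + c k * n : ℤ) : ℂ))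
          * (starRingEnd ℂ) (U 0 k) := by
    rw [Matrix.mul_apply]
    congr 1
    ext k
    rw [Matrix.mul_diagonal, Matrix.conjTranspose_apply, Complex.star_def]
  rw [hentry]
  have hval1 : (((1 : Fin n) : ℕ) : ℂ) = 1 := by
    have h1 : ((1 : Fin n) : ℕ) = 1 := by
      simp [Fin.val_one', Nat.mod_eq_of_lt hn]
    rw [h1]; norm_num
  have hval0 : (((0 : Fin n) : ℕ) : ℂ) = 0 := by norm_num
  have hterm : ∀ k : Fin n, U 1 k * Complex.exp (t * ((j * (k:ℕ) + c k * n : ℤ) : ℂ))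
      * (starRingEnd ℂ) (U 0 k) = 1 / n := by
    intro k
    rw [hphase k]
    simp only [hUdef, hval1, hval0]
    rw [show (2 * (Real.pi:ℂ) * Complex.I * 0 * ((k:ℕ):ℂ) / (n:ℂ)) = 0 by ring,
      Complex.exp_zero, map_div₀, RingHom.map_one, Complex.conj_ofReal]
    rw [div_mul_eq_mul_div, ← Complex.exp_add]
    rw [show (2 * (Real.pi:ℂ) * Complex.I * 1 * ((k:ℕ):ℂ) / (n:ℂ)
        + -(2 * (Real.pi:ℂ) * Complex.I * ((k:ℕ):ℂ) / (n:ℂ))) = 0 by ring,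
      Complex.exp_zero]
    rw [div_mul_div_comm, one_mul, hsq]
  rw [Finset.sum_congr rfl (fun k _ => hterm k)]
  rw [Finset.sum_const, Finset.card_univ, Fintype.card_fin, nsmul_eq_mul]
  field_simp
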